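/- (Scalar summation formula) For every positive even integer n with ab ≠ 1, (1 − ab)·∑_{k=0}^{n−1} j_k = j_n·(1 − b) + 2·j_{n−1}·(1 − a) + (a − 1), and for every positive odd integer n, (1 − ab)·∑_{k=0}^{n−1} j_k = j_n·(1 − a) + 2·j_{n−1}·(1 − b) + (a − 1). -/
import Mathlib


noncomputable def jj (a b : ℝ) : ℕ → ℝ
  | 0 => 0
  | 1 => 1
  | n + 2 => (if Even (n + 2) then a else b) * jj a b (n + 1) + 2 * jj a b n

theorem stmt11 (a b : ℝ) (ha : a ≠ 0) (hb : b ≠ 0) (hab : a * b ≠ 1)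
    (n : ℕ) (hn : 0 < n) :
    (Even n → (1 - a * b) * ∑ k ∈ Finset.range n, jj a b k
        = jj a b n * (1 - b) + 2 * jj a b (n - 1) * (1 - a) + (a - 1)) ∧
    (Odd n → (1 - a * b) * ∑ k ∈ Finset.range n, jj a b k
        = jj a b n * (1 - a) + 2 * jj a b (n - 1) * (1 - b) + (a - 1)) := by
  induction n with
  | zero => exact absurd hn (lt_irrefl 0)
  | succ m ih =>
    cases m with
    | zero =>
      constructor
      · intro h; simp at h
      · intro _
        simp [jj, Finset.sum_range_one]
    | succ k =>
      have ih' := ih (Nat.succ_pos k)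
      have hrec : jj a b (k + 2) =
          (if Even (k + 2) then a else b) * jj a b (k + 1) + 2 * jj a b k := by
        simp [jj]
      rcases Nat.even_or_odd (k + 2) with he | ho
      · have hko : Odd (k + 1) := by
          rcases he with ⟨t, ht⟩
          exact ⟨t - 1, by omega⟩
        have h1 := ih'.2 hko
        simp only [Finset.sum_range_succ, Nat.add_sub_cancel] at h1 ⊢
        rw [hrec, if_pos he]
        constructor
        · intro _
          linarith [h1, mul_comm a b]
        · intro h
          exact absurd h (Nat.not_odd_iff_even.mpr he)
      · have hke : Even (k + 1) := by
          rcases ho with ⟨t, ht⟩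
          exact ⟨t, by omega⟩
        have h1 := ih'.1 hke
        simp only [Finset.sum_range_succ, Nat.add_sub_cancel] at h1 ⊢
        rw [hrec, if_neg (by exact Nat.not_even_iff_odd.mpr ho)]
        constructor
        · intro h
          exact absurd ho (by simpa using h)
        · intro _
          linarith [h1, mul_comm a b]
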